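/- arXiv:1810.09056 — 2 statements merged into one kernel-verified Lean document; each statement's English description precedes it below -/
import Mathlib

section
/- Let $(\mathfrak{a}, \mathfrak{m})$ be a complete local ring and $f \in \mathfrak{a}[X]$ a polynomial with at least one coefficient outside $\mathfrak{m}$; let $k$ be the largest index with $f_k \notin \mathfrak{m}$. Then the factorization $f = u q$ with $q$ monic of degree $k$ and $u$ of the form $u_0 + u_1 X + \cdots + u_{d-k} X^{d-k}$, $u_0 \notin \mathfrak{m}$, $u_i \in \mathfrak{m}$ for $i \geq 1$, is unique. -/
open Polynomial IsLocalRing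

/-- Weierstrass preparation for polynomials, uniqueness. -/
theorem stmt_7 (A : Type*) [CommRing A] [IsLocalRing A]
    [IsAdicComplete (maximalIdeal A) A]
    (f : A[X]) (K : ℕ)
    (hK : f.coeff K ∉ maximalIdeal A)
    (hK' : ∀ i, K < i → f.coeff i ∈ maximalIdeal A)
    (q u q' u' : A[X])
    (hq : q.Monic) (hqdeg : q.natDegree = K)
    (hu : u.natDegree ≤ f.natDegree - K)
    (hu0 : u.coeff 0 ∉ maximalIdeal A)
    (hui : ∀ i, 1 ≤ i → u.coeff i ∈ maximalIdeal A)
    (hf : f = u * q)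
    (hq2 : q'.Monic) (hqdeg2 : q'.natDegree = K)
    (hu2 : u'.natDegree ≤ f.natDegree - K)
    (hu02 : u'.coeff 0 ∉ maximalIdeal A)
    (hui2 : ∀ i, 1 ≤ i → u'.coeff i ∈ maximalIdeal A)
    (hf2 : f = u' * q') :
    u = u' ∧ q = q' := by
  set M := maximalIdeal A with hM
  -- the basic relation
  have hrel : u * (q - q') + (u - u') * q' = 0 := by linear_combination hf2 - hf
  have hrelc : ∀ j, (u * (q - q')).coeff j + ((u - u') * q').coeff j = 0 := by
    intro j
    have := congrArg (fun p : A[X] => p.coeff j) hrel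
    simpa using this
  -- degree facts
  have hδq : ∀ b, K ≤ b → (q - q').coeff b = 0 := by
    intro b hb
    rcases eq_or_lt_of_le hb with h | h
    · rw [coeff_sub, ← h, ← hqdeg, hq.coeff_natDegree, hqdeg, ← hqdeg2, hq2.coeff_natDegree,
        sub_self]
    · rw [coeff_sub, coeff_eq_zero_of_natDegree_lt (hqdeg ▸ h),
        coeff_eq_zero_of_natDegree_lt (hqdeg2 ▸ h), sub_self]
  have hq'K : q'.coeff K = 1 := by rw [← hqdeg2]; exact hq2.coeff_natDegree
  have hq'high : ∀ b, K < b → q'.coeff b = 0 := fun b hb =>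
    coeff_eq_zero_of_natDegree_lt (hqdeg2 ▸ hb)
  have hu0unit : IsUnit (u.coeff 0) := by
    by_contra h
    exact hu0 ((mem_maximalIdeal _).mpr (mem_nonunits_iff.mpr h))
  obtain ⟨v, hv⟩ := hu0unit.exists_left_inv
  -- main induction
  have main : ∀ n : ℕ, (∀ j, (u - u').coeff j ∈ M ^ n) ∧ (∀ j, (q - q').coeff j ∈ M ^ n) := by
    intro n
    induction n with
    | zero => simp
    | succ n ih =>
      obtain ⟨ihu, ihq⟩ := ih
      -- the first summand, at coefficients ≥ K, lies in M^(n+1)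
      have h1 : ∀ j, (u * (q - q')).coeff (K + j) ∈ M ^ (n + 1) := by
        intro j
        rw [coeff_mul]
        apply Ideal.sum_mem
        rintro ⟨a, b⟩ hx
        have hab : a + b = K + j := Finset.HasAntidiagonal.mem_antidiagonal.mp hx
        rcases le_or_gt K b with h | h
        · rw [hδq b h, mul_zero]; exact zero_mem _
        · have ha : 1 ≤ a := by omega
          rw [pow_succ, mul_comm (u.coeff a)]
          exact Ideal.mul_mem_mul (ihq b) (hui a ha)
      -- step A : coefficients of u - u' are in M^(n+1), by downward induction
      have stepA : ∀ t j, (u - u').natDegree < j + t → (u - u').coeff j ∈ M ^ (n + 1) := by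
        intro t
        induction t with
        | zero =>
          intro j hj
          rw [coeff_eq_zero_of_natDegree_lt (by omega)]
          exact zero_mem _
        | succ t iht =>
          intro j hj
          have h2 : ((u - u') * q').coeff (K + j) ∈ M ^ (n + 1) := by
            have heq : ((u - u') * q').coeff (K + j) = -((u * (q - q')).coeff (K + j)) :=
              eq_neg_of_add_eq_zero_right (hrelc (K + j))
            rw [heq]
            exact neg_mem (h1 j)
          -- expand the product and split off the (j, K) term
          have hmem : (j, K) ∈ Finset.HasAntidiagonal.antidiagonal (K + j) := by
            simp [Nat.add_comm]
          have hsum : ∑ x ∈ (Finset.HasAntidiagonal.antidiagonal (K + j)).erase (j, K),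
              (u - u').coeff x.1 * q'.coeff x.2 + (u - u').coeff j * q'.coeff K
              = ((u - u') * q').coeff (K + j) := by
            rw [coeff_mul]
            exact Finset.sum_erase_add _ _ hmem
          have hrest : ∑ x ∈ (Finset.HasAntidiagonal.antidiagonal (K + j)).erase (j, K),
              (u - u').coeff x.1 * q'.coeff x.2 ∈ M ^ (n + 1) := by
            apply Ideal.sum_mem
            rintro ⟨a, b⟩ hx
            have hne : (a, b) ≠ (j, K) := Finset.ne_of_mem_erase hx
            have hab : a + b = K + j :=
              Finset.HasAntidiagonal.mem_antidiagonal.mp (Finset.mem_of_mem_erase hx)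
            rcases lt_trichotomy a j with h | h | h
            · rw [hq'high b (by omega), mul_zero]; exact zero_mem _
            · exact absurd (by simp [h]; omega) hne
            · exact Ideal.mul_mem_right _ _ (iht a (by omega))
          have : (u - u').coeff j * q'.coeff K ∈ M ^ (n + 1) := by
            have := hsum ▸ h2
            have h3 : (u - u').coeff j * q'.coeff K
                = ((u - u') * q').coeff (K + j)
                  - ∑ x ∈ (Finset.HasAntidiagonal.antidiagonal (K + j)).erase (j, K),
                    (u - u').coeff x.1 * q'.coeff x.2 := by
              rw [← hsum]; ring
            rw [h3]
            exact sub_mem h2 hrest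
          rwa [hq'K, mul_one] at this
      have hdu : ∀ j, (u - u').coeff j ∈ M ^ (n + 1) := fun j =>
        stepA ((u - u').natDegree + 1) j (by omega)
      -- step B : coefficients of q - q'
      have hdq : ∀ j, (q - q').coeff j ∈ M ^ (n + 1) := by
        intro j
        have h2 : ((u - u') * q').coeff j ∈ M ^ (n + 1) := by
          rw [coeff_mul]
          apply Ideal.sum_mem
          rintro ⟨a, b⟩ hx
          exact Ideal.mul_mem_right _ _ (hdu a)
        have h1' : (u * (q - q')).coeff j ∈ M ^ (n + 1) := by
          have heq : (u * (q - q')).coeff j = -(((u - u') * q').coeff j) :=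
            eq_neg_of_add_eq_zero_left (hrelc j)
          rw [heq]; exact neg_mem h2
        -- split off the (0, j) term
        have hmem : ((0 : ℕ), j) ∈ Finset.HasAntidiagonal.antidiagonal j := by simp
        have hsum : ∑ x ∈ (Finset.HasAntidiagonal.antidiagonal j).erase (0, j),
            u.coeff x.1 * (q - q').coeff x.2 + u.coeff 0 * (q - q').coeff j
            = (u * (q - q')).coeff j := by
          rw [coeff_mul]
          exact Finset.sum_erase_add _ _ hmem
        have hrest : ∑ x ∈ (Finset.HasAntidiagonal.antidiagonal j).erase (0, j),
            u.coeff x.1 * (q - q').coeff x.2 ∈ M ^ (n + 1) := by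
          apply Ideal.sum_mem
          rintro ⟨a, b⟩ hx
          have hne : (a, b) ≠ (0, j) := Finset.ne_of_mem_erase hx
          have hab : a + b = j := Finset.HasAntidiagonal.mem_antidiagonal.mp (Finset.mem_of_mem_erase hx)
          have ha : 1 ≤ a := by
            rcases Nat.eq_zero_or_pos a with h | h
            · exact absurd (by simp [h]; omega) hne
            · exact h
          rw [pow_succ, mul_comm (u.coeff a)]
          exact Ideal.mul_mem_mul (ihq b) (hui a ha)
        have hkey : u.coeff 0 * (q - q').coeff j ∈ M ^ (n + 1) := by
          have h3 : u.coeff 0 * (q - q').coeff j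
              = (u * (q - q')).coeff j
                - ∑ x ∈ (Finset.HasAntidiagonal.antidiagonal j).erase (0, j),
                  u.coeff x.1 * (q - q').coeff x.2 := by
            rw [← hsum]; ring
          rw [h3]
          exact sub_mem h1' hrest
        have : v * (u.coeff 0 * (q - q').coeff j) ∈ M ^ (n + 1) :=
          Ideal.mul_mem_left _ _ hkey
        rwa [← mul_assoc, hv, one_mul] at this
      exact ⟨hdu, hdq⟩
  -- conclude via Hausdorff-ness
  have hHaus : IsHausdorff M A := inferInstance
  have hzero : ∀ x : A, (∀ n : ℕ, x ∈ M ^ n) → x = 0 := by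
    intro x hx
    refine hHaus.haus x fun n => ?_
    rw [SModEq.zero, Ideal.smul_top_eq_map]
    simpa using hx n
  have hU : u = u' := by
    have : u - u' = 0 := by
      ext j
      simpa using hzero ((u - u').coeff j) fun n => (main n).1 j
    exact sub_eq_zero.mp this
  have hQ : q = q' := by
    have : q - q' = 0 := by
      ext j
      simpa using hzero ((q - q').coeff j) fun n => (main n).2 j
    exact sub_eq_zero.mp this
  exact ⟨hU, hQ⟩
end

section
/- Let $R$ be a commutative ring and $a, b \in R[y]$. For every subresultant $S_j$ of $a$ and $b$ there exist polynomials $u_j, v_j \in R[y]$ such that $S_j = u_j a + v_j b$; in particular every subresultant of $a$ and $b$ lies in the ideal $\langle a, b \rangle$ of $R[y]$. -/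
open Polynomial

/-- The `j`-th subresultant polynomial of `a` and `b`, defined by the usual
determinantal formula: the determinant of the `(m+n-2j) × (m+n-2j)` Sylvester-like
matrix whose first `n-j` rows hold the coefficients of `X^(n-j-1-i) * a` and whose
last `m-j` rows hold the coefficients of `X^(m-j-1-i) * b` (column `c` holding the
coefficient of degree `m+n-j-1-c`), the last column containing the polynomials
themselves. -/
noncomputable def subresultant {R : Type*} [CommRing R] (a b : R[X]) (j : ℕ) :
    R[X] :=
  letI m := a.natDegree
  letI n := b.natDegree
  Matrix.det (Matrix.of fun r c : Fin (m + n - 2 * j) =>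
    if (r : ℕ) < n - j then
      if (c : ℕ) = m + n - 2 * j - 1 then X ^ (n - j - 1 - (r : ℕ)) * a
      else if (c : ℕ) ≤ m + (r : ℕ) then C (a.coeff (m + (r : ℕ) - (c : ℕ)))
      else 0
    else
      if (c : ℕ) = m + n - 2 * j - 1 then
        X ^ (m - j - 1 - ((r : ℕ) - (n - j))) * b
      else if (c : ℕ) ≤ n + ((r : ℕ) - (n - j)) then
        C (b.coeff (n + ((r : ℕ) - (n - j)) - (c : ℕ)))
      else 0)

/-- every subresultant of `a` and `b` is a combination `u*a + v*b`;
in particular it lies in the ideal `⟨a, b⟩` of `R[y]`. -/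
theorem stmt_11 (R : Type*) [CommRing R] (a b : R[X])
    (hb : b.natDegree ≤ a.natDegree) (j : ℕ) (hj : j < b.natDegree) :
    (∃ u v : R[X], subresultant a b j = u * a + v * b) ∧
      subresultant a b j ∈ Ideal.span {a, b} := by
  have hmem : subresultant a b j ∈ Ideal.span {a, b} := by
    have ha : a ∈ Ideal.span ({a, b} : Set R[X]) :=
      Ideal.subset_span (by simp)
    have hbmem : b ∈ Ideal.span ({a, b} : Set R[X]) :=
      Ideal.subset_span (by simp)
    unfold subresultant
    rw [Matrix.det_apply']
    apply Ideal.sum_mem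
    intro σ _
    apply Ideal.mul_mem_left
    have hd : 0 < a.natDegree + b.natDegree - 2 * j := by omega
    set N := a.natDegree + b.natDegree - 2 * j with hN
    have hlast : (⟨N - 1, by omega⟩ : Fin N) ∈ (Finset.univ : Finset (Fin N)) :=
      Finset.mem_univ _
    rw [← Finset.prod_erase_mul _ _ hlast]
    apply Ideal.mul_mem_left
    simp only [Matrix.of_apply]
    have hc : ((⟨N - 1, by omega⟩ : Fin N) : ℕ) = a.natDegree + b.natDegree - 2 * j - 1 := by
      simp [hN]
    split
    · exact Ideal.mul_mem_left _ _ ha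
    · exact Ideal.mul_mem_left _ _ hbmem
  obtain ⟨u, v, h⟩ := Ideal.mem_span_pair.mp hmem
  exact ⟨⟨u, v, h.symm⟩, hmem⟩
end
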